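/- Suppose condition (★) holds. Then the set K := {(v_1,…,v_k) ∈ M_1 × ⋯ × M_k : dim(W + span{v_1,…,v_k}) < h + k} is a null set with respect to the product of additive Haar measures on M_1 × ⋯ × M_k. -/

import Mathlib

open MeasureTheory

section AuxStarLemma
set_option maxHeartbeats 1000000
set_option synthInstance.maxHeartbeats 400000
open MeasureTheory Module Submodule Set

variable {n : ℕ}

/-- composing a dependent insertNth with a family of maps to a fixed type -/
lemma insertNth_val_comp {k : ℕ} {α : Fin (k+1) → Type*} {β : Type*}
    (g : ∀ j, α j → β) (i : Fin (k+1)) (x : α i) (p : ∀ j, α (i.succAbove j)) :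
    (fun j => g j (i.insertNth x p j)) = i.insertNth (g i x) (fun j => g _ (p j)) := by
  funext j
  refine i.succAboveCases ?_ ?_ j
  · simp
  · intro m; simp

lemma range_insertNth' {k : ℕ} {β : Type*} (i : Fin (k+1)) (x : β) (p : Fin k → β) :
    Set.range (i.insertNth x p) = insert x (Set.range p) := by
  ext y
  constructor
  · rintro ⟨j, rfl⟩
    refine i.succAboveCases ?_ ?_ j
    · simp
    · intro m
      exact Set.mem_insert_iff.mpr (Or.inr ⟨m, by simp⟩)
  · rintro (rfl | ⟨m, rfl⟩)
    · exact ⟨i, by simp⟩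
    · exact ⟨i.succAbove m, by simp⟩

/-- rank identity: `finrank (W ⊔ span range v) = finrank W + finrank (span (range (f ∘ v)))`
when `ker f = W`. -/
lemma finrank_sup_span_range_eq {k : ℕ} {F : Type*} [AddCommGroup F] [Module ℝ F]
    (W : Submodule ℝ (Fin n → ℝ)) (f : (Fin n → ℝ) →ₗ[ℝ] F) (hf : LinearMap.ker f = W)
    (v : Fin k → (Fin n → ℝ)) :
    finrank ℝ ↥(W ⊔ span ℝ (Set.range v)) =
      finrank ℝ ↥W + finrank ℝ ↥(span ℝ (Set.range (f ∘ v))) := by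
  set U := W ⊔ span ℝ (Set.range v) with hU
  have hWU : W ≤ U := le_sup_left
  have h1 := (f.comp U.subtype).finrank_range_add_finrank_ker
  have hrange : LinearMap.range (f.comp U.subtype) = span ℝ (Set.range (f ∘ v)) := by
    rw [LinearMap.range_comp, Submodule.range_subtype, hU, Submodule.map_sup,
      Submodule.map_span, ← Set.range_comp]
    have : Submodule.map f W = ⊥ := by
      rw [← hf]; exact le_bot_iff.mp (Submodule.map_le_iff_le_comap.mpr le_rfl)
    rw [this, bot_sup_eq]
  have hker : LinearMap.ker (f.comp U.subtype) = Submodule.comap U.subtype W := by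
    rw [LinearMap.ker_comp, hf]
  have h2 : finrank ℝ ↥(LinearMap.ker (f.comp U.subtype)) = finrank ℝ ↥W := by
    rw [hker]; exact (Submodule.comapSubtypeEquivOfLe hWU).finrank_eq
  rw [hrange, h2] at h1
  omega

variable {n : ℕ}

lemma finrank_span_lt_iff {k : ℕ} {F : Type*} [AddCommGroup F] [Module ℝ F]
    (u : Fin k → F) :
    finrank ℝ ↥(span ℝ (Set.range u)) < k ↔ ¬ LinearIndependent ℝ u := by
  have hle : finrank ℝ ↥(span ℝ (Set.range u)) ≤ k := by
    classical
    calc finrank ℝ ↥(span ℝ (Set.range u)) ≤ (Set.range u).toFinset.card :=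
          finrank_span_le_card _
      _ ≤ k := by
          rw [Set.toFinset_range]
          exact (Finset.card_image_le).trans (by simp)
  have hiff := linearIndependent_iff_card_eq_finrank_span (R := ℝ) (b := u)
  rw [hiff]
  unfold Set.finrank
  constructor
  · intro h h2
    simp only [Fintype.card_fin] at h2
    omega
  · intro h
    rcases lt_or_eq_of_le hle with h' | h'
    · exact h'
    · exact absurd (by simp [h']) h

lemma bad_measurable {k : ℕ} (W : Submodule ℝ (Fin n → ℝ)) (M : Fin k → Submodule ℝ (Fin n → ℝ)) :
    MeasurableSet {v : (j : Fin k) → ↥(M j) |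
      finrank ℝ ↥(W ⊔ span ℝ (Set.range fun j => (v j : Fin n → ℝ))) < finrank ℝ ↥W + k} := by
  obtain ⟨Wc, hWc⟩ := Submodule.exists_isCompl W
  set f : (Fin n → ℝ) →ₗ[ℝ] ↥Wc := Wc.linearProjOfIsCompl W hWc.symm with hfdef
  have hker : LinearMap.ker f = W := Submodule.linearProjOfIsCompl_ker hWc.symm
  have hset : {v : (j : Fin k) → ↥(M j) |
      finrank ℝ ↥(W ⊔ span ℝ (Set.range fun j => (v j : Fin n → ℝ))) < finrank ℝ ↥W + k}
      = (fun (v : (j : Fin k) → ↥(M j)) (j : Fin k) => f (v j : Fin n → ℝ)) ⁻¹'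
        {u : Fin k → ↥Wc | ¬ LinearIndependent ℝ u} := by
    ext v
    simp only [Set.mem_setOf_eq, Set.mem_preimage]
    rw [finrank_sup_span_range_eq W f hker (fun j => (v j : Fin n → ℝ))]
    simp only [Function.comp_def]
    rw [← finrank_span_lt_iff]
    constructor <;> intro h <;> omega
  rw [hset]
  have hcont : ∀ j : Fin k, Continuous fun x : ↥(M j) => f (x : Fin n → ℝ) :=
    fun j => (f.comp (M j).subtype).continuous_of_finiteDimensional
  have hmeas : Measurable fun (v : (j : Fin k) → ↥(M j)) (j : Fin k) => f (v j : Fin n → ℝ) :=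
    measurable_pi_lambda _ fun j => ((hcont j).measurable).comp (measurable_pi_apply j)
  exact hmeas (isOpen_setOf_linearIndependent.measurableSet.compl)

lemma aux (n : ℕ) : ∀ (k : ℕ) (W : Submodule ℝ (Fin n → ℝ))
    (M : Fin k → Submodule ℝ (Fin n → ℝ)),
    (∀ S : Finset (Fin k), finrank ℝ ↥W + S.card ≤ finrank ℝ ↥(W ⊔ ⨆ j ∈ S, M j)) →
    ∀ (ν : (j : Fin k) → Measure ↥(M j)),
    (∀ j, (ν j).IsAddHaarMeasure) → (∀ j, SigmaFinite (ν j)) →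
    Measure.pi ν {v : (j : Fin k) → ↥(M j) |
      finrank ℝ ↥(W ⊔ span ℝ (Set.range fun j => (v j : Fin n → ℝ))) <
        finrank ℝ ↥W + k} = 0 := by
  intro k
  induction k with
  | zero =>
    intro W M hstar ν hHaar hσ
    have : {v : (j : Fin 0) → ↥(M j) |
        finrank ℝ ↥(W ⊔ span ℝ (Set.range fun j => (v j : Fin n → ℝ))) <
          finrank ℝ ↥W + 0} = ∅ := by
      ext v
      simp only [Set.mem_setOf_eq, Set.mem_empty_iff_false, iff_false, not_lt, add_zero]
      exact Submodule.finrank_mono le_sup_left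
    rw [this, measure_empty]
  | succ k IH =>
    intro W M hstar ν hHaar hσ
    haveI := hHaar
    haveI := hσ
    classical
    set i : Fin (k + 1) := Fin.last k with hi
    set U : Finset (Fin k) → Submodule ℝ (Fin n → ℝ) :=
      fun S => W ⊔ S.sup (fun j => M (i.succAbove j)) with hU
    have hstarU : ∀ S : Finset (Fin k), finrank ℝ ↥W + S.card ≤ finrank ℝ ↥(U S) := by
      intro S
      have h1 := hstar (S.map (i.succAboveEmb))
      rw [Finset.card_map] at h1
      have h2 : (⨆ j ∈ S.map (i.succAboveEmb), M j) = S.sup (fun j => M (i.succAbove j)) := by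
        rw [← Finset.sup_eq_iSup, Finset.sup_map]
        rfl
      rw [h2] at h1
      exact h1
    have hstar2 : ∀ S : Finset (Fin k), M i ≤ U S →
        finrank ℝ ↥W + S.card + 1 ≤ finrank ℝ ↥(U S) := by
      intro S hle
      have hnotmem : i ∉ S.map (i.succAboveEmb) := by
        simp only [Finset.mem_map, Fin.succAboveEmb_apply]
        rintro ⟨m, _, hm⟩
        exact Fin.succAbove_ne i m hm
      have h1 := hstar (insert i (S.map (i.succAboveEmb)))
      rw [Finset.card_insert_of_notMem hnotmem, Finset.card_map] at h1
      have h2 : (⨆ j ∈ insert i (S.map (i.succAboveEmb)), M j)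
          = M i ⊔ S.sup (fun j => M (i.succAbove j)) := by
        rw [← Finset.sup_eq_iSup, Finset.sup_insert, Finset.sup_map]
        rfl
      rw [h2] at h1
      have h3 : W ⊔ (M i ⊔ S.sup (fun j => M (i.succAbove j))) = U S := by
        rw [sup_left_comm]
        exact sup_eq_right.mpr hle
      rw [h3] at h1
      omega
    -- a.e. avoidance of bad subspaces for the last coordinate
    have hxa : ∀ᵐ x : ↥(M i) ∂(ν i), ∀ S : Finset (Fin k),
        ¬ (M i ≤ U S) → (x : Fin n → ℝ) ∉ U S := by
      rw [ae_all_iff]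
      intro S
      by_cases hle : M i ≤ U S
      · exact Filter.Eventually.of_forall (fun x h => absurd hle h)
      · refine Filter.Eventually.mono ?_ (fun x hx _ => hx)
        have hz : ν i (((U S).comap (M i).subtype : Submodule ℝ ↥(M i)) : Set ↥(M i)) = 0 :=
          Measure.addHaar_submodule _ _
            (by rw [Ne, Submodule.comap_subtype_eq_top]; exact hle)
        rw [ae_iff]
        refine measure_mono_null ?_ hz
        intro x hx
        simp only [Set.mem_setOf_eq, not_not] at hx
        simpa [Submodule.mem_comap] using hx
    have mp := measurePreserving_piFinSuccAbove ν i
    have hB : MeasurableSet {v : (j : Fin (k+1)) → ↥(M j) |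
        finrank ℝ ↥(W ⊔ span ℝ (Set.range fun j => (v j : Fin n → ℝ))) <
          finrank ℝ ↥W + (k+1)} := bad_measurable W M
    have he := ((mp.symm (MeasurableEquiv.piFinSuccAbove (fun j => ↥(M j)) i)).measure_preimage hB.nullMeasurableSet).symm
    rw [he, Measure.measure_prod_null (hB.preimage (MeasurableEquiv.measurable _))]
    filter_upwards [hxa] with x hx
    simp only [Pi.zero_apply]
    set W' := W ⊔ span ℝ {(x : Fin n → ℝ)} with hW'
    have hxW : (x : Fin n → ℝ) ∉ W := by
      have h0 : ¬ (M i ≤ U ∅) := by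
        intro hle
        have h2 := hstar2 ∅ hle
        have h3 : U ∅ = W := by
          rw [hU]; simp
        rw [h3] at h2
        simp at h2
      have h4 := hx ∅ h0
      have h3 : U ∅ = W := by rw [hU]; simp
      rwa [h3] at h4
    have hxne : (x : Fin n → ℝ) ≠ 0 := fun h => hxW (h ▸ W.zero_mem)
    have hW'f : finrank ℝ ↥W' = finrank ℝ ↥W + 1 := by
      have hlt : W < W' := SetLike.lt_iff_le_and_exists.mpr
        ⟨le_sup_left, (x : Fin n → ℝ),
          Submodule.mem_sup_right (Submodule.mem_span_singleton_self _), hxW⟩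
      have h1 : finrank ℝ ↥W < finrank ℝ ↥W' := Submodule.finrank_lt_finrank_of_lt hlt
      have h2 : finrank ℝ ↥W' ≤ finrank ℝ ↥W + 1 := by
        have h3 := Submodule.finrank_sup_add_finrank_inf_eq W (span ℝ {(x : Fin n → ℝ)})
        rw [← hW'] at h3
        have h4 : finrank ℝ ↥(span ℝ {(x : Fin n → ℝ)}) = 1 := finrank_span_singleton hxne
        omega
      omega
    have hstar' : ∀ S : Finset (Fin k), finrank ℝ ↥W' + S.card ≤
        finrank ℝ ↥(W' ⊔ ⨆ j ∈ S, M (i.succAbove j)) := by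
      intro S
      have hWU' : W' ⊔ ⨆ j ∈ S, M (i.succAbove j) = U S ⊔ span ℝ {(x : Fin n → ℝ)} := by
        rw [← Finset.sup_eq_iSup, hW', hU, sup_right_comm]
      rw [hW'f, hWU']
      by_cases hle : M i ≤ U S
      · have h2 := hstar2 S hle
        have h3 : finrank ℝ ↥(U S) ≤ finrank ℝ ↥(U S ⊔ span ℝ {(x : Fin n → ℝ)}) :=
          Submodule.finrank_mono le_sup_left
        omega
      · have hxU := hx S hle
        have hlt : U S < U S ⊔ span ℝ {(x : Fin n → ℝ)} := SetLike.lt_iff_le_and_exists.mpr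
          ⟨le_sup_left, (x : Fin n → ℝ),
            Submodule.mem_sup_right (Submodule.mem_span_singleton_self _), hxU⟩
        have h1 := Submodule.finrank_lt_finrank_of_lt hlt
        have h2 := hstarU S
        omega
    have IH' := IH W' (fun j => M (i.succAbove j)) hstar' (fun j => ν (i.succAbove j))
      (fun j => hHaar _) (fun j => hσ _)
    have hset : (Prod.mk x ⁻¹' ((MeasurableEquiv.piFinSuccAbove (fun j => ↥(M j)) i).symm ⁻¹'
        {v : (j : Fin (k+1)) → ↥(M j) |
          finrank ℝ ↥(W ⊔ span ℝ (Set.range fun j => (v j : Fin n → ℝ))) <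
            finrank ℝ ↥W + (k+1)}))
        = {w : (j : Fin k) → ↥(M (i.succAbove j)) |
            finrank ℝ ↥(W' ⊔ span ℝ (Set.range fun j => (w j : Fin n → ℝ))) <
              finrank ℝ ↥W' + k} := by
      ext w
      simp only [Set.mem_preimage, Set.mem_setOf_eq,
        MeasurableEquiv.piFinSuccAbove_symm_apply, Fin.insertNthEquiv, Equiv.coe_fn_mk]
      rw [insertNth_val_comp (fun j (y : ↥(M j)) => (y : Fin n → ℝ)) i x w]
      rw [range_insertNth', Submodule.span_insert, ← sup_assoc, ← hW', hW'f]
      constructor <;> intro h <;> omega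
    rw [hset]
    exact IH'

end AuxStarLemma

/-- Appendix-A Lemma, statement (1): if condition (★) holds, then the set of tuples
`(v_1,…,v_k) ∈ M_1 × ⋯ × M_k` with `dim(W + span{v_1,…,v_k}) < h + k` is null with respect
to the product of additive Haar measures on `M_1 × ⋯ × M_k`. -/
theorem bad_tuples_null_of_star
    (n k : ℕ) (hk : 1 ≤ k) (W : Submodule ℝ (Fin n → ℝ))
    (M : Fin k → Submodule ℝ (Fin n → ℝ)) (hM : ∀ j, M j ≠ ⊥)
    (hstar : ∀ S : Finset (Fin k),
      Module.finrank ℝ ↥W + S.card ≤ Module.finrank ℝ ↥(W ⊔ ⨆ j ∈ S, M j))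
    (ν : (j : Fin k) → Measure ↥(M j))
    [∀ j, (ν j).IsAddHaarMeasure] [∀ j, SigmaFinite (ν j)] :
    Measure.pi ν {v : (j : Fin k) → ↥(M j) |
      Module.finrank ℝ
          ↥(W ⊔ Submodule.span ℝ (Set.range fun j => (v j : Fin n → ℝ))) <
        Module.finrank ℝ ↥W + k} = 0 :=
  aux n k W M hstar ν (fun j => inferInstance) (fun j => inferInstance)
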